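/- The function F(z) := ∫₀^∞ (1/(x+1) − 1/(x+z)) dx is complex differentiable at every point z of the open right half-plane {z ∈ ℂ : Re z > 0}, with derivative F′(z) = 1/z, and F(1) = 0. -/

import Mathlib

open MeasureTheory Set Filter Topology Metric

lemma aux_ne {x : ℝ} {u : ℂ} (hx : 0 ≤ x) (hu : 0 < u.re) : (x : ℂ) + u ≠ 0 := by
  intro h
  have : x + u.re = 0 := by simpa using congrArg Complex.re h
  linarith

lemma aux_norm (x : ℝ) (u : ℂ) : x + u.re ≤ ‖(x : ℂ) + u‖ := by
  have := Complex.re_le_norm ((x : ℂ) + u)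
  simpa using this

lemma bound_integrable (c : ℝ) (hc : 0 < c) :
    IntegrableOn (fun x : ℝ => ((x + c) ^ 2)⁻¹) (Set.Ioi 0) := by
  have hderiv : ∀ x ∈ Ioi (0:ℝ), HasDerivAt (fun x : ℝ => -(x + c)⁻¹) (((x + c) ^ 2)⁻¹) x := by
    intro x hx
    have hx0 : 0 < x := hx
    have hne : x + c ≠ 0 := by positivity
    have h1 : HasDerivAt (fun x : ℝ => x + c) 1 x := (hasDerivAt_id x).add_const c
    have h2 := (h1.inv hne).neg
    rw [show ((x + c) ^ 2)⁻¹ = -(-1 / (x + c) ^ 2) by ring]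
    exact h2
  have hcont : ContinuousWithinAt (fun x : ℝ => -(x + c)⁻¹) (Ici 0) 0 := by
    have : (0:ℝ) + c ≠ 0 := by positivity
    exact (((continuousAt_id.add continuousAt_const).inv₀ this).neg).continuousWithinAt
  have htend : Tendsto (fun x : ℝ => -(x + c)⁻¹) atTop (𝓝 0) := by
    have := (tendsto_inv_atTop_zero.comp (tendsto_atTop_add_const_right atTop c tendsto_id)).neg
    simpa using this
  exact integrableOn_Ioi_deriv_of_nonneg hcont hderiv
    (fun x hx => by positivity) htend

lemma cderiv (z : ℂ) (hz : 0 < z.re) :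
    ∀ x ∈ Ioi (0:ℝ), HasDerivAt (fun x : ℝ => -((x : ℂ) + z)⁻¹) ((((x : ℂ) + z) ^ 2)⁻¹) x := by
  intro x hx
  have hne : (x : ℂ) + z ≠ 0 := aux_ne (le_of_lt hx) hz
  have h1 : HasDerivAt (fun x : ℝ => ((x : ℂ) + z)) 1 x := by
    simpa using (Complex.ofRealCLM.hasDerivAt (x := x)).add_const z
  have h2 : HasDerivAt (fun y : ℝ => -((1:ℂ) / ((y : ℂ) + z)))
      (-((0 * ((x : ℂ) + z) - 1 * 1) / ((x : ℂ) + z) ^ 2)) x :=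
    ((hasDerivAt_const x (1 : ℂ)).div h1 hne).neg
  simp only [one_div] at h2
  convert h2 using 1
  field_simp
  ring

lemma cint_integrable (z : ℂ) (hz : 0 < z.re) :
    IntegrableOn (fun x : ℝ => (((x : ℂ) + z) ^ 2)⁻¹) (Set.Ioi 0) := by
  apply Integrable.mono' (bound_integrable z.re hz)
  · apply ContinuousOn.aestronglyMeasurable _ measurableSet_Ioi
    intro x hx
    exact (((Complex.continuous_ofReal.continuousAt.add continuousAt_const).pow 2).inv₀
      (pow_ne_zero 2 (aux_ne (le_of_lt hx) hz))).continuousWithinAt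
  · rw [ae_restrict_iff' measurableSet_Ioi]
    filter_upwards with x
    intro hx
    have h1 : (0:ℝ) < x + z.re := by have : (0:ℝ) < x := hx; linarith
    have h2 := aux_norm x z
    rw [norm_inv, norm_pow]
    apply inv_anti₀ (by positivity)
    exact pow_le_pow_left₀ (le_of_lt h1) h2 2

lemma cint (z : ℂ) (hz : 0 < z.re) :
    ∫ x : ℝ in Ioi 0, (((x : ℂ) + z) ^ 2)⁻¹ = z⁻¹ := by
  have hne0 : ((0:ℝ) : ℂ) + z ≠ 0 := aux_ne le_rfl hz
  have hcont : ContinuousWithinAt (fun x : ℝ => -((x : ℂ) + z)⁻¹) (Ici 0) 0 :=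
    (((Complex.continuous_ofReal.continuousAt.add continuousAt_const).inv₀
      hne0).neg).continuousWithinAt
  have htend : Tendsto (fun x : ℝ => -((x : ℂ) + z)⁻¹) atTop (𝓝 0) := by
    refine squeeze_zero_norm' ?_
      (tendsto_inv_atTop_zero.comp (tendsto_atTop_add_const_right atTop z.re tendsto_id))
    filter_upwards [eventually_ge_atTop (0:ℝ)] with x hx
    have h1 : (0:ℝ) < x + z.re := by linarith
    rw [norm_neg, norm_inv]
    exact inv_anti₀ h1 (aux_norm x z)
  have := integral_Ioi_of_hasDerivAt_of_tendsto hcont (cderiv z hz)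
    (cint_integrable z hz) htend
  rw [this]
  simp

theorem statement8 :
    (∀ z : ℂ, 0 < z.re →
      HasDerivAt
        (fun w : ℂ => ∫ x : ℝ in Set.Ioi 0, (1 / ((x : ℂ) + 1) - 1 / ((x : ℂ) + w)))
        (1 / z) z) ∧
    (∫ x : ℝ in Set.Ioi 0, (1 / ((x : ℂ) + 1) - 1 / ((x : ℂ) + 1))) = 0 := by
  constructor
  · intro z hz
    set ε := z.re / 2 with hε
    have hεpos : 0 < ε := by positivity
    -- real parts of points in the ball
    have hball : ∀ w ∈ ball z ε, ε < w.re := by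
      intro w hw
      have h1 : ‖w - z‖ < ε := by simpa [dist_eq_norm] using hw
      have h2 : |w.re - z.re| ≤ ‖w - z‖ := by
        have := Complex.abs_re_le_norm (w - z)
        simpa using this
      have := abs_lt.mp (lt_of_le_of_lt h2 h1)
      have : z.re - ε < w.re := by linarith [this.1]
      linarith [this]
    have key := hasDerivAt_integral_of_dominated_loc_of_deriv_le (μ := volume.restrict (Ioi 0))
      (F := fun w : ℂ => fun x : ℝ => 1 / ((x : ℂ) + 1) - 1 / ((x : ℂ) + w))
      (F' := fun w : ℂ => fun x : ℝ => (((x : ℂ) + w) ^ 2)⁻¹)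
      (x₀ := z) (bound := fun x : ℝ => ((x + ε) ^ 2)⁻¹) (ball_mem_nhds z hεpos)
      ?_ ?_ ?_ ?_ ?_ ?_
    · have := key.2
      rw [cint z hz] at this
      simpa [one_div] using this
    · -- measurability of F w near z
      filter_upwards [IsOpen.mem_nhds (isOpen_lt continuous_const Complex.continuous_re)
        (show (0:ℝ) < z.re from hz)] with w hw
      apply ContinuousOn.aestronglyMeasurable _ measurableSet_Ioi
      intro x hx
      have hx0 : (0:ℝ) ≤ x := le_of_lt hx
      have h1 : (x : ℂ) + 1 ≠ 0 := aux_ne hx0 (by norm_num)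
      have h2 : (x : ℂ) + w ≠ 0 := aux_ne hx0 hw
      have c1 : ContinuousAt (fun x : ℝ => 1 / ((x : ℂ) + 1)) x := by
        simp only [one_div]
        exact (Complex.continuous_ofReal.continuousAt.add continuousAt_const).inv₀ h1
      have c2 : ContinuousAt (fun x : ℝ => 1 / ((x : ℂ) + w)) x := by
        simp only [one_div]
        exact (Complex.continuous_ofReal.continuousAt.add continuousAt_const).inv₀ h2
      exact (c1.sub c2).continuousWithinAt
    · -- integrability of F z
      have hc : 0 < min 1 z.re := lt_min one_pos hz
      set c := min 1 z.re with hcdef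
      apply Integrable.mono' ((bound_integrable c hc).const_mul ‖z - 1‖)
      · apply ContinuousOn.aestronglyMeasurable _ measurableSet_Ioi
        intro x hx
        have hx0 : (0:ℝ) ≤ x := le_of_lt hx
        have h1 : (x : ℂ) + 1 ≠ 0 := aux_ne hx0 (by norm_num)
        have h2 : (x : ℂ) + z ≠ 0 := aux_ne hx0 hz
        have c1 : ContinuousAt (fun x : ℝ => 1 / ((x : ℂ) + 1)) x := by
          simp only [one_div]
          exact (Complex.continuous_ofReal.continuousAt.add continuousAt_const).inv₀ h1
        have c2 : ContinuousAt (fun x : ℝ => 1 / ((x : ℂ) + z)) x := by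
          simp only [one_div]
          exact (Complex.continuous_ofReal.continuousAt.add continuousAt_const).inv₀ h2
        exact (c1.sub c2).continuousWithinAt
      · rw [ae_restrict_iff' measurableSet_Ioi]
        filter_upwards with x
        intro hx
        have hx0 : (0:ℝ) ≤ x := le_of_lt hx
        have h1 : (x : ℂ) + 1 ≠ 0 := aux_ne hx0 (by norm_num)
        have h2 : (x : ℂ) + z ≠ 0 := aux_ne hx0 hz
        have heq : 1 / ((x : ℂ) + 1) - 1 / ((x : ℂ) + z)
            = (z - 1) / (((x : ℂ) + 1) * ((x : ℂ) + z)) := by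
          field_simp
          ring
        rw [heq, norm_div, norm_mul]
        have hxc1 : x + c ≤ ‖(x : ℂ) + 1‖ := by
          have h := aux_norm x (1 : ℂ)
          simp only [Complex.one_re] at h
          have hc1 : c ≤ 1 := min_le_left _ _
          linarith
        have hxc2 : x + c ≤ ‖(x : ℂ) + z‖ := by
          calc x + c ≤ x + z.re := by linarith [min_le_right 1 z.re]
            _ ≤ ‖(x : ℂ) + z‖ := aux_norm x z
        have hpos : (0:ℝ) < x + c := by linarith
        calc ‖z - 1‖ / (‖(x : ℂ) + 1‖ * ‖(x : ℂ) + z‖)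
            ≤ ‖z - 1‖ / ((x + c) * (x + c)) := by
              apply div_le_div_of_nonneg_left (norm_nonneg _) (by positivity)
              exact mul_le_mul hxc1 hxc2 (le_of_lt hpos) (norm_nonneg _)
          _ = ‖z - 1‖ * ((x + c) ^ 2)⁻¹ := by rw [div_eq_mul_inv, sq]
    · -- measurability of F' z
      apply ContinuousOn.aestronglyMeasurable _ measurableSet_Ioi
      intro x hx
      exact (((Complex.continuous_ofReal.continuousAt.add continuousAt_const).pow 2).inv₀
        (pow_ne_zero 2 (aux_ne (le_of_lt hx) hz))).continuousWithinAt
    · -- bound on the ball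
      rw [ae_restrict_iff' measurableSet_Ioi]
      filter_upwards with x
      intro hx w hw
      have hwre := hball w hw
      have hpos : (0:ℝ) < x + ε := by have : (0:ℝ) < x := hx; linarith
      rw [norm_inv, norm_pow]
      apply inv_anti₀ (by positivity)
      apply pow_le_pow_left₀ (le_of_lt hpos)
      calc x + ε ≤ x + w.re := by linarith
        _ ≤ ‖(x : ℂ) + w‖ := aux_norm x w
    · exact bound_integrable ε hεpos
    · -- differentiability on the ball
      rw [ae_restrict_iff' measurableSet_Ioi]
      filter_upwards with x
      intro hx w hw
      have hwre := hball w hw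
      have hne : (x : ℂ) + w ≠ 0 := aux_ne (le_of_lt hx) (lt_trans hεpos hwre)
      have h1 : HasDerivAt (fun w : ℂ => (x : ℂ) + w) 1 w := (hasDerivAt_id w).const_add _
      have hne' : (fun w : ℂ => (x : ℂ) + w) w ≠ 0 := hne
      have h2 := ((h1.inv hne').const_sub (1 / ((x : ℂ) + 1)))
      have h3 : HasDerivAt (fun w : ℂ => 1 / ((x : ℂ) + 1) - ((x : ℂ) + w)⁻¹)
          ((((x : ℂ) + w) ^ 2)⁻¹) w := by
        rw [show (((x : ℂ) + w) ^ 2)⁻¹ = -(-1 / ((x : ℂ) + w) ^ 2) by ring]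
        exact h2
      simpa [one_div] using h3
  · simp
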